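/- Let P be a probability measure on ℝ with CDF F, and let a < b be reals. Then ∫_{(a,b]} x dP(x) = b·F(b) - a·F(a) - ∫ₐᵇ F(x) dx (integration by parts on the half-open interval (a,b]). -/

import Mathlib

open MeasureTheory

noncomputable def rho (τ : ℝ) (x : ℝ) : ℝ := if x ≤ 0 then (τ - 1) * x else τ * x

noncomputable def cdf' (P : Measure ℝ) (x : ℝ) : ℝ := (P (Set.Iic x)).toReal
noncomputable def primF (P : Measure ℝ) (x : ℝ) : ℝ := ∫ u in (0:ℝ)..x, cdf' P u

theorem stmt6 (P : Measure ℝ) [IsProbabilityMeasure P] (a b : ℝ) (hab : a < b) :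
    ∫ x in Set.Ioc a b, x ∂P =
      b * cdf' P b - a * cdf' P a - ∫ x in a..b, cdf' P x := by
  have hFmono : Monotone (cdf' P) := fun x y hxy => by
    unfold cdf'
    exact ENNReal.toReal_mono (measure_ne_top P _) (measure_mono (Set.Iic_subset_Iic.2 hxy))
  have hIoc : ∀ c d : ℝ, c ≤ d → (P (Set.Ioc c d)).toReal = cdf' P d - cdf' P c := by
    intro c d hcd
    rw [← Set.Iic_sdiff_Iic, measure_diff (Set.Iic_subset_Iic.2 hcd)
      measurableSet_Iic.nullMeasurableSet (measure_ne_top P _),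
      ENNReal.toReal_sub_of_le (measure_mono (Set.Iic_subset_Iic.2 hcd)) (measure_ne_top P _)]
    rfl
  set μ := P.restrict (Set.Ioc a b) with hμ
  have hmem : ∀ᵐ x ∂μ, x ∈ Set.Ioc a b := ae_restrict_mem measurableSet_Ioc
  -- integrability of (x - a)
  have hint : Integrable (fun x => x - a) μ := by
    refine Integrable.mono' (integrable_const (b - a)) ?_ ?_
    · exact (measurable_id.sub measurable_const).aestronglyMeasurable
    · filter_upwards [hmem] with x hx
      rw [Real.norm_eq_abs, abs_of_nonneg (by linarith [hx.1])]
      linarith [hx.2]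
  have hnn : 0 ≤ᵐ[μ] fun x => x - a := by
    filter_upwards [hmem] with x hx; simp; linarith [hx.1]
  have key := hint.integral_eq_integral_meas_lt hnn
  -- tail measure
  have htail : ∀ t ∈ Set.Ioc 0 (b - a),
      (μ {x : ℝ | t < x - a}).toReal = cdf' P b - cdf' P (a + t) := by
    intro t ht
    have : {x : ℝ | t < x - a} = Set.Ioi (a + t) := by ext x; simp [Set.mem_Ioi]; constructor <;> intro <;> linarith
    rw [hμ, Measure.restrict_apply (by rw [this]; exact measurableSet_Ioi), this]
    have : Set.Ioi (a + t) ∩ Set.Ioc a b = Set.Ioc (a + t) b := by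
      ext x
      simp only [Set.mem_inter_iff, Set.mem_Ioi, Set.mem_Ioc]
      constructor
      · rintro ⟨h1, _, h3⟩; exact ⟨h1, h3⟩
      · rintro ⟨h1, h2⟩; exact ⟨h1, by linarith [ht.1], h2⟩
    rw [this, hIoc _ _ (by linarith [ht.2])]
  have hzero : ∀ t ∈ Set.Ioi (b - a), (μ {x : ℝ | t < x - a}).toReal = 0 := by
    intro t ht
    have : μ {x : ℝ | t < x - a} = 0 := by
      rw [hμ, Measure.restrict_apply (by
        have : {x : ℝ | t < x - a} = Set.Ioi (a + t) := by ext x; simp [Set.mem_Ioi]; constructor <;> intro <;> linarith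
        rw [this]; exact measurableSet_Ioi)]
      refine measure_mono_null (fun x hx => ?_) (measure_empty)
      simp only [Set.mem_inter_iff, Set.mem_setOf_eq, Set.mem_Ioc] at hx
      simp only [Set.mem_empty_iff_false]
      have := hx.1; have := hx.2.2; simp at ht; linarith
    simp [this]
  -- reduce Ioi 0 integral to Ioc 0 (b-a)
  have hsplit : (∫ t in Set.Ioi (0:ℝ), (μ {x : ℝ | t < x - a}).toReal) =
      ∫ t in Set.Ioc 0 (b - a), (μ {x : ℝ | t < x - a}).toReal := by
    rw [← setIntegral_eq_of_subset_of_ae_diff_eq_zero measurableSet_Ioi.nullMeasurableSet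
      Set.Ioc_subset_Ioi_self ?_]
    filter_upwards with t ht
    rcases ht with ⟨ht1, ht2⟩
    simp only [Set.mem_Ioi] at ht1
    simp only [Set.mem_Ioc, not_and, not_le] at ht2
    exact hzero t (ht2 ht1)
  have hcongr : (∫ t in Set.Ioc 0 (b - a), (μ {x : ℝ | t < x - a}).toReal) =
      ∫ t in Set.Ioc 0 (b - a), (cdf' P b - cdf' P (a + t)) := by
    apply setIntegral_congr_fun measurableSet_Ioc
    intro t ht; exact htail t ht
  have hba : (0:ℝ) ≤ b - a := by linarith
  have hII : IntervalIntegrable (fun t => cdf' P (a + t)) volume 0 (b - a) :=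
    (hFmono.comp (fun x y h => by dsimp; linarith : Monotone fun t : ℝ => a + t)).intervalIntegrable
  have hIoc_int : (∫ t in Set.Ioc 0 (b - a), (cdf' P b - cdf' P (a + t))) =
      (b - a) * cdf' P b - ∫ x in a..b, cdf' P x := by
    rw [← intervalIntegral.integral_of_le hba, intervalIntegral.integral_sub
      intervalIntegrable_const hII, intervalIntegral.integral_const,
      intervalIntegral.integral_comp_add_left (cdf' P) a]
    simp [smul_eq_mul]
  -- combine
  have hμu : (μ Set.univ).toReal = (P (Set.Ioc a b)).toReal := by
    rw [hμ, Measure.restrict_apply MeasurableSet.univ, Set.univ_inter]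
  have hsub : ∫ x in Set.Ioc a b, x ∂P = (∫ x, (x - a) ∂μ) + a * (cdf' P b - cdf' P a) := by
    calc ∫ x in Set.Ioc a b, x ∂P = ∫ x, ((x - a) + a) ∂μ := by
          rw [hμ]; congr 1; funext x; ring
      _ = (∫ x, (x - a) ∂μ) + a * (μ Set.univ).toReal := by
          rw [integral_add hint (integrable_const a), integral_const, smul_eq_mul, mul_comm]; rfl
      _ = (∫ x, (x - a) ∂μ) + a * (cdf' P b - cdf' P a) := by
          rw [hμu, hIoc a b hab.le]
  simp only [Measure.real_def] at key
  rw [hsub, key, hsplit, hcongr, hIoc_int]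
  ring
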